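/- Let μ and ν be Borel probability measures on ℝ such that ν has a Lebesgue density bounded by C > 0. Then the Kolmogorov distance satisfies 𝒦(μ, ν) ≤ √(2 C W₁(μ, ν)), where W₁ is the 1-Wasserstein distance. -/

import Mathlib

open MeasureTheory
open scoped ENNReal

private lemma ramp_lipschitz (a ε : ℝ) :
    LipschitzWith 1 (fun x => min (max (a - x) 0) ε) := by
  have h : Isometry (fun x : ℝ => a - x) := Isometry.of_dist_eq fun x y => by
    simp [Real.dist_eq, abs_sub_comm]; ring_nf
  exact (h.lipschitz.max_const 0).min_const ε

private lemma ramp_nonneg (a ε : ℝ) (hε : 0 ≤ ε) (x : ℝ) :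
    0 ≤ min (max (a - x) 0) ε := le_min (le_max_right _ _) hε

private lemma ramp_le (a ε : ℝ) (x : ℝ) : min (max (a - x) 0) ε ≤ ε := min_le_right _ _

private lemma ramp_integrable (a ε : ℝ) (hε : 0 ≤ ε) (m : Measure ℝ) [IsFiniteMeasure m] :
    Integrable (fun x => min (max (a - x) 0) ε) m := by
  refine (integrable_const ε).mono' (ramp_lipschitz a ε).continuous.aestronglyMeasurable
    (ae_of_all _ fun x => ?_)
  rw [Real.norm_eq_abs, abs_of_nonneg (ramp_nonneg a ε hε x)]
  exact ramp_le a ε x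

/-- Compare ν-integral with volume integral when ν ≤ C • volume. -/
private lemma nu_setIntegral_le (ν : Measure ℝ) (C : ℝ) (hC : 0 ≤ C)
    (hle : ν ≤ (ENNReal.ofReal C) • (volume : Measure ℝ))
    (s : Set ℝ) (hs : MeasurableSet s) (f : ℝ → ℝ) (hf : ∀ x ∈ s, 0 ≤ f x)
    (hint : Integrable f (volume.restrict s)) :
    ∫ x in s, f x ∂ν ≤ C * ∫ x in s, f x := by
  have hres : ν.restrict s ≤ ((ENNReal.ofReal C) • (volume : Measure ℝ)).restrict s :=
    Measure.restrict_mono (le_refl s) hle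
  have hint2 : Integrable f (((ENNReal.ofReal C) • (volume : Measure ℝ)).restrict s) := by
    rw [Measure.restrict_smul]
    exact hint.smul_measure ENNReal.ofReal_ne_top
  calc ∫ x in s, f x ∂ν ≤ ∫ x in s, f x ∂((ENNReal.ofReal C) • (volume : Measure ℝ)) :=
        integral_mono_measure hres ((ae_restrict_iff' hs).2 (ae_of_all _ hf)) hint2
    _ = C * ∫ x in s, f x := by
        rw [Measure.restrict_smul, integral_smul_measure, ENNReal.toReal_ofReal hC,
          smul_eq_mul]

open intervalIntegral in
private lemma vol_int_right (t ε : ℝ) (hε : 0 ≤ ε) :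
    ∫ x in Set.Ioc t (t + ε), (t + ε - x) = ε ^ 2 / 2 := by
  rw [← integral_of_le (by linarith)]
  rw [integral_sub intervalIntegrable_const intervalIntegrable_id,
    intervalIntegral.integral_const, integral_id]
  · simp only [smul_eq_mul]; ring

open intervalIntegral in
private lemma vol_int_left (t ε : ℝ) (hε : 0 ≤ ε) :
    ∫ x in Set.Ioc (t - ε) t, (x - (t - ε)) = ε ^ 2 / 2 := by
  rw [← integral_of_le (by linarith)]
  rw [integral_sub intervalIntegrable_id intervalIntegrable_const,
    intervalIntegral.integral_const, integral_id]
  · simp only [smul_eq_mul]; ring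

private lemma case_right (μ ν : Measure ℝ) [IsProbabilityMeasure μ] [IsProbabilityMeasure ν]
    (C : ℝ) (hC : 0 < C) (hle : ν ≤ (ENNReal.ofReal C) • (volume : Measure ℝ))
    (W : ℝ)
    (hdual : ∀ f : ℝ → ℝ, LipschitzWith 1 f →
      (∫ x, f x ∂μ) - (∫ x, f x ∂ν) ≤ W)
    (t ε : ℝ) (hε : 0 < ε) :
    ε * ((μ (Set.Iic t)).toReal - (ν (Set.Iic t)).toReal) ≤ W + C * ε ^ 2 / 2 := by
  set g : ℝ → ℝ := fun x => min (max (t + ε - x) 0) ε with hg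
  have hgint_μ : Integrable g μ := ramp_integrable _ _ hε.le μ
  have hgint_ν : Integrable g ν := ramp_integrable _ _ hε.le ν
  -- lower bound for ∫ g dμ
  have hind_int : Integrable (Set.indicator (Set.Iic t) (fun _ => ε)) μ :=
    (integrable_const ε).indicator measurableSet_Iic
  have ha : ε * (μ (Set.Iic t)).toReal ≤ ∫ x, g x ∂μ := by
    have hpt : ∀ x, Set.indicator (Set.Iic t) (fun _ => ε) x ≤ g x := by
      intro x
      by_cases hx : x ≤ t
      · simp only [Set.indicator_of_mem (Set.mem_Iic.2 hx)]
        exact le_min (le_max_of_le_left (by linarith)) le_rfl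
      · simp only [Set.indicator_of_notMem (fun h => hx (Set.mem_Iic.1 h))]
        exact ramp_nonneg _ _ hε.le x
    calc ε * (μ (Set.Iic t)).toReal
        = ∫ x, Set.indicator (Set.Iic t) (fun _ => ε) x ∂μ := by
          rw [integral_indicator_const _ measurableSet_Iic, smul_eq_mul, mul_comm]; rfl
      _ ≤ ∫ x, g x ∂μ := integral_mono hind_int hgint_μ hpt
  -- upper bound for ∫ g dν
  have hb : ∫ x, g x ∂ν ≤ ε * (ν (Set.Iic t)).toReal + C * ε ^ 2 / 2 := by
    have hgeq : g = fun x => Set.indicator (Set.Iic t) (fun _ => ε) x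
        + Set.indicator (Set.Ioc t (t + ε)) (fun x => t + ε - x) x := by
      funext x
      simp only [hg]
      rcases le_or_gt x t with h1 | h1
      · have hx1 : x ∈ Set.Iic t := h1
        have hx2 : x ∉ Set.Ioc t (t + ε) := fun h => absurd h.1 (not_lt.2 h1)
        rw [Set.indicator_of_mem hx1, Set.indicator_of_notMem hx2, add_zero]
        rw [max_eq_left (by linarith : (0:ℝ) ≤ t + ε - x), min_eq_right (by linarith)]
      · rcases le_or_gt x (t + ε) with h2 | h2
        · have hx1 : x ∉ Set.Iic t := fun h => absurd (Set.mem_Iic.1 h) (not_le.2 h1)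
          have hx2 : x ∈ Set.Ioc t (t + ε) := ⟨h1, h2⟩
          rw [Set.indicator_of_notMem hx1, Set.indicator_of_mem hx2, zero_add]
          rw [max_eq_left (by linarith : (0:ℝ) ≤ t + ε - x), min_eq_left (by linarith)]
        · have hx1 : x ∉ Set.Iic t := fun h => absurd (Set.mem_Iic.1 h) (not_le.2 h1)
          have hx2 : x ∉ Set.Ioc t (t + ε) := fun h => absurd h.2 (not_le.2 h2)
          rw [Set.indicator_of_notMem hx1, Set.indicator_of_notMem hx2, add_zero]
          rw [max_eq_right (by linarith : t + ε - x ≤ (0:ℝ)), min_eq_left hε.le]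
    have hind1 : Integrable (Set.indicator (Set.Iic t) (fun _ => ε)) ν :=
      (integrable_const ε).indicator measurableSet_Iic
    have hind2 : Integrable (Set.indicator (Set.Ioc t (t + ε)) (fun x => t + ε - x)) ν := by
      refine (integrable_const ε).mono'
        (((measurable_const.sub measurable_id).indicator
          measurableSet_Ioc).aestronglyMeasurable) (ae_of_all _ fun x => ?_)
      rw [Real.norm_eq_abs]
      by_cases hx : x ∈ Set.Ioc t (t + ε)
      · rw [Set.indicator_of_mem hx, abs_of_nonneg (by linarith [hx.2])]
        linarith [hx.1]
      · rw [Set.indicator_of_notMem hx]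
        simpa using hε.le
    have hsplit : ∫ x, g x ∂ν = (∫ x, Set.indicator (Set.Iic t) (fun _ => ε) x ∂ν)
        + ∫ x, Set.indicator (Set.Ioc t (t + ε)) (fun x => t + ε - x) x ∂ν := by
      rw [hgeq]; exact integral_add hind1 hind2
    have h1 : ∫ x, Set.indicator (Set.Iic t) (fun _ => ε) x ∂ν
        = ε * (ν (Set.Iic t)).toReal := by
      rw [integral_indicator_const _ measurableSet_Iic, smul_eq_mul, mul_comm]; rfl
    have h2 : ∫ x, Set.indicator (Set.Ioc t (t + ε)) (fun x => t + ε - x) x ∂ν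
        ≤ C * ε ^ 2 / 2 := by
      rw [integral_indicator measurableSet_Ioc]
      have hint : Integrable (fun x => t + ε - x) (volume.restrict (Set.Ioc t (t + ε))) :=
        (continuous_const.sub continuous_id).integrableOn_Ioc
      calc ∫ x in Set.Ioc t (t + ε), (t + ε - x) ∂ν
          ≤ C * ∫ x in Set.Ioc t (t + ε), (t + ε - x) :=
            nu_setIntegral_le ν C hC.le hle _ measurableSet_Ioc _
              (fun x hx => by linarith [hx.2]) hint
        _ = C * (ε ^ 2 / 2) := by rw [vol_int_right t ε hε.le]
        _ = C * ε ^ 2 / 2 := by ring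
    rw [hsplit, h1]
    linarith
  have hdg := hdual g (ramp_lipschitz (t + ε) ε)
  nlinarith [ha, hb, hdg]

private lemma case_left (μ ν : Measure ℝ) [IsProbabilityMeasure μ] [IsProbabilityMeasure ν]
    (C : ℝ) (hC : 0 < C) (hle : ν ≤ (ENNReal.ofReal C) • (volume : Measure ℝ))
    (W : ℝ)
    (hdual : ∀ f : ℝ → ℝ, LipschitzWith 1 f →
      (∫ x, f x ∂μ) - (∫ x, f x ∂ν) ≤ W)
    (t ε : ℝ) (hε : 0 < ε) :
    ε * ((ν (Set.Iic t)).toReal - (μ (Set.Iic t)).toReal) ≤ W + C * ε ^ 2 / 2 := by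
  set g : ℝ → ℝ := fun x => min (max (t - x) 0) ε with hg
  have hgint_μ : Integrable g μ := ramp_integrable _ _ hε.le μ
  have hgint_ν : Integrable g ν := ramp_integrable _ _ hε.le ν
  -- upper bound for ∫ g dμ
  have ha : ∫ x, g x ∂μ ≤ ε * (μ (Set.Iic t)).toReal := by
    have hind_int : Integrable (Set.indicator (Set.Iic t) (fun _ => ε)) μ :=
      (integrable_const ε).indicator measurableSet_Iic
    have hpt : ∀ x, g x ≤ Set.indicator (Set.Iic t) (fun _ => ε) x := by
      intro x
      simp only [hg]
      by_cases hx : x ≤ t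
      · rw [Set.indicator_of_mem (Set.mem_Iic.2 hx)]
        exact ramp_le _ _ x
      · rw [Set.indicator_of_notMem (fun h => hx (Set.mem_Iic.1 h))]
        rw [max_eq_right (by linarith [not_le.1 hx] : t - x ≤ (0:ℝ)), min_eq_left hε.le]
    calc ∫ x, g x ∂μ ≤ ∫ x, Set.indicator (Set.Iic t) (fun _ => ε) x ∂μ :=
          integral_mono hgint_μ hind_int hpt
      _ = ε * (μ (Set.Iic t)).toReal := by
          rw [integral_indicator_const _ measurableSet_Iic, smul_eq_mul, mul_comm]; rfl
  -- lower bound for ∫ g dν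
  have hb : ε * (ν (Set.Iic t)).toReal - C * ε ^ 2 / 2 ≤ ∫ x, g x ∂ν := by
    have hgeq : g = fun x => Set.indicator (Set.Iic t) (fun _ => ε) x
        - Set.indicator (Set.Ioc (t - ε) t) (fun x => x - (t - ε)) x := by
      funext x
      simp only [hg]
      rcases le_or_gt x (t - ε) with h1 | h1
      · have hx1 : x ∈ Set.Iic t := Set.mem_Iic.2 (by linarith)
        have hx2 : x ∉ Set.Ioc (t - ε) t := fun h => absurd h.1 (not_lt.2 h1)
        rw [Set.indicator_of_mem hx1, Set.indicator_of_notMem hx2, sub_zero]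
        rw [max_eq_left (by linarith : (0:ℝ) ≤ t - x), min_eq_right (by linarith)]
      · rcases le_or_gt x t with h2 | h2
        · have hx1 : x ∈ Set.Iic t := h2
          have hx2 : x ∈ Set.Ioc (t - ε) t := ⟨h1, h2⟩
          rw [Set.indicator_of_mem hx1, Set.indicator_of_mem hx2]
          rw [max_eq_left (by linarith : (0:ℝ) ≤ t - x), min_eq_left (by linarith)]
          ring
        · have hx1 : x ∉ Set.Iic t := fun h => absurd (Set.mem_Iic.1 h) (not_le.2 h2)
          have hx2 : x ∉ Set.Ioc (t - ε) t := fun h => absurd h.2 (not_le.2 h2)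
          rw [Set.indicator_of_notMem hx1, Set.indicator_of_notMem hx2, sub_zero]
          rw [max_eq_right (by linarith : t - x ≤ (0:ℝ)), min_eq_left hε.le]
    have hind1 : Integrable (Set.indicator (Set.Iic t) (fun _ => ε)) ν :=
      (integrable_const ε).indicator measurableSet_Iic
    have hind2 : Integrable (Set.indicator (Set.Ioc (t - ε) t) (fun x => x - (t - ε))) ν := by
      refine (integrable_const ε).mono'
        (((measurable_id.sub measurable_const).indicator
          measurableSet_Ioc).aestronglyMeasurable) (ae_of_all _ fun x => ?_)
      rw [Real.norm_eq_abs]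
      by_cases hx : x ∈ Set.Ioc (t - ε) t
      · rw [Set.indicator_of_mem hx, abs_of_nonneg (by linarith [hx.1])]
        linarith [hx.2]
      · rw [Set.indicator_of_notMem hx]
        simpa using hε.le
    have hsplit : ∫ x, g x ∂ν = (∫ x, Set.indicator (Set.Iic t) (fun _ => ε) x ∂ν)
        - ∫ x, Set.indicator (Set.Ioc (t - ε) t) (fun x => x - (t - ε)) x ∂ν := by
      rw [hgeq]; exact integral_sub hind1 hind2
    have h1 : ∫ x, Set.indicator (Set.Iic t) (fun _ => ε) x ∂ν
        = ε * (ν (Set.Iic t)).toReal := by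
      rw [integral_indicator_const _ measurableSet_Iic, smul_eq_mul, mul_comm]; rfl
    have h2 : ∫ x, Set.indicator (Set.Ioc (t - ε) t) (fun x => x - (t - ε)) x ∂ν
        ≤ C * ε ^ 2 / 2 := by
      rw [integral_indicator measurableSet_Ioc]
      have hint : Integrable (fun x => x - (t - ε))
          (volume.restrict (Set.Ioc (t - ε) t)) :=
        (continuous_id.sub continuous_const).integrableOn_Ioc
      calc ∫ x in Set.Ioc (t - ε) t, (x - (t - ε)) ∂ν
          ≤ C * ∫ x in Set.Ioc (t - ε) t, (x - (t - ε)) :=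
            nu_setIntegral_le ν C hC.le hle _ measurableSet_Ioc _
              (fun x hx => by linarith [hx.1]) hint
        _ = C * (ε ^ 2 / 2) := by rw [vol_int_left t ε hε.le]
        _ = C * ε ^ 2 / 2 := by ring
    rw [hsplit, h1]
    linarith
  have hlip : LipschitzWith 1 (fun x => -g x) := (ramp_lipschitz t ε).neg
  have hdg := hdual (fun x => -g x) hlip
  rw [integral_neg, integral_neg] at hdg
  nlinarith [ha, hb, hdg]

/-- If `μ, ν` are Borel probability measures on `ℝ`, `ν` has a Lebesgue density bounded by
`C > 0`, and `W` bounds the Kantorovich–Rubinstein dual expressions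
`∫ f dμ − ∫ f dν` over all `1`-Lipschitz `f` (in particular one may take
`W = W₁(μ,ν)`), then the Kolmogorov distance satisfies
`sup_t |F_μ(t) − F_ν(t)| ≤ √(2 C W)`. -/
theorem kolmogorov_le_sqrt_wasserstein
    (μ ν : Measure ℝ) [IsProbabilityMeasure μ] [IsProbabilityMeasure ν]
    (C : ℝ) (hC : 0 < C) (d : ℝ → ℝ≥0∞)
    (hν : ν = volume.withDensity d) (hd : ∀ x, d x ≤ ENNReal.ofReal C)
    (W : ℝ) (hW : 0 ≤ W)
    (hdual : ∀ f : ℝ → ℝ, LipschitzWith 1 f →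
      (∫ x, f x ∂μ) - (∫ x, f x ∂ν) ≤ W) :
    ∀ t : ℝ, |(μ (Set.Iic t)).toReal - (ν (Set.Iic t)).toReal| ≤
      Real.sqrt (2 * C * W) := by
  have hle : ν ≤ (ENNReal.ofReal C) • (volume : Measure ℝ) := by
    rw [Measure.le_iff]
    intro s hs
    rw [hν, withDensity_apply _ hs, Measure.smul_apply, smul_eq_mul]
    calc ∫⁻ x in s, d x ≤ ∫⁻ _ in s, ENNReal.ofReal C := lintegral_mono fun x => hd x
      _ = ENNReal.ofReal C * volume s := by rw [setLIntegral_const]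
  intro t
  set Δ : ℝ := (μ (Set.Iic t)).toReal - (ν (Set.Iic t)).toReal with hΔ
  have key : ∀ ε : ℝ, 0 < ε → |Δ| * ε ≤ W + C * ε ^ 2 / 2 := by
    intro ε hε
    have h1 := case_right μ ν C hC hle W hdual t ε hε
    have h2 := case_left μ ν C hC hle W hdual t ε hε
    rcases abs_cases Δ with ⟨habs, _⟩ | ⟨habs, _⟩
    · rw [habs]; nlinarith
    · rw [habs]; nlinarith
  rcases eq_or_lt_of_le hW with hW0 | hWpos
  · -- W = 0
    have hzero : |Δ| ≤ 0 := by
      by_contra h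
      push_neg at h
      have hkey := key (|Δ| / C) (by positivity)
      rw [← hW0, zero_add] at hkey
      have heq : C * (|Δ| / C) ^ 2 / 2 = |Δ| * (|Δ| / C) / 2 := by
        field_simp
      rw [heq] at hkey
      have hx : 0 < |Δ| * (|Δ| / C) := by positivity
      linarith
    rw [← hW0]
    exact hzero.trans (Real.sqrt_nonneg _)
  · -- W > 0
    set ε : ℝ := Real.sqrt (2 * W / C) with hεdef
    have hεpos : 0 < ε := Real.sqrt_pos.2 (by positivity)
    have hε2 : ε ^ 2 = 2 * W / C := Real.sq_sqrt (by positivity)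
    have hkey := key ε hεpos
    have hRHS : W + C * ε ^ 2 / 2 = 2 * W := by
      rw [hε2]; field_simp; ring
    rw [hRHS] at hkey
    have hse : Real.sqrt (2 * C * W) * ε = 2 * W := by
      rw [hεdef, ← Real.sqrt_mul (by positivity)]
      rw [show 2 * C * W * (2 * W / C) = (2 * W) ^ 2 by field_simp]
      exact Real.sqrt_sq (by positivity)
    have hfin : |Δ| * ε ≤ Real.sqrt (2 * C * W) * ε := by rw [hse]; exact hkey
    exact le_of_mul_le_mul_right hfin hεpos
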